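/- There exists no mechanism that is both nonempty and incentive compatible: for every (randomised) mechanism ℳ, if for every IKEP instance I whose compatibility graph contains at least one Γ-cycle the distribution ℳ(I) assigns probability 0 to the empty packing (nonemptiness), then ℳ is not incentive compatible. -/

import Mathlib

open scoped Classical

/-- An `n`-partitioned compatibility graph: a finite directed graph on a finite
set of natural-number vertices, without self-loops, whose vertex set is
partitioned into `n` nonempty countries. -/
structure PartGraph (n : ℕ) where
  verts : Finset ℕ
  arcs : Finset (ℕ × ℕ)
  arcs_mem : ∀ p ∈ arcs, p.1 ∈ verts ∧ p.2 ∈ verts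
  no_loops : ∀ v, (v, v) ∉ arcs
  country : ℕ → Fin n
  country_nonempty : ∀ i : Fin n, ∃ v ∈ verts, country v = i

/-- Cyclic access to the entries of a list. -/
def cyc (l : List ℕ) (k : ℕ) : ℕ := l.getD (k % l.length) 0

/-- `l` is a (directed) cycle of `G`: a cyclic sequence of at least two distinct
vertices, consecutive ones (cyclically) joined by arcs. -/
def IsCycle {n : ℕ} (G : PartGraph n) (l : List ℕ) : Prop :=
  2 ≤ l.length ∧ l.Nodup ∧ (∀ v ∈ l, v ∈ G.verts) ∧
    ∀ k < l.length, (cyc l k, cyc l (k + 1)) ∈ G.arcs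

/-- All vertices of `l` belong to country `i`. -/
def IsNationalTo {n : ℕ} (G : PartGraph n) (l : List ℕ) (i : Fin n) : Prop :=
  ∀ v ∈ l, G.country v = i

/-- A national cycle: all vertices in one country. -/
def IsNational {n : ℕ} (G : PartGraph n) (l : List ℕ) : Prop :=
  ∃ i, IsNationalTo G l i

/-- An international cycle: not national (equivalently, for cycles, it contains
an international arc). -/
def IsInternational {n : ℕ} (G : PartGraph n) (l : List ℕ) : Prop :=
  ¬ IsNational G l

/-- Position `k` (taken cyclically) is the start of a `V_i`-segment of `l`:
the vertex there is in country `i` but the cyclically preceding one is not. -/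
def segStart {n : ℕ} (G : PartGraph n) (l : List ℕ) (i : Fin n) (k : ℕ) : Prop :=
  G.country (cyc l k) = i ∧ G.country (cyc l (k + l.length - 1)) ≠ i

/-- The size of the run of consecutive (cyclic) positions of `l`, starting at
position `k`, whose vertices are in country `i`.  At a segment start this is
exactly the size of that `V_i`-segment. -/
noncomputable def runLen {n : ℕ} (G : PartGraph n) (l : List ℕ) (i : Fin n) (k : ℕ) : ℕ :=
  ((Finset.range l.length).filter
    fun j => ∀ j' ≤ j, G.country (cyc l (k + j')) = i).card

/-- The number of `V_i`-segments of the cycle `l`. -/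
noncomputable def numSegs {n : ℕ} (G : PartGraph n) (l : List ℕ) (i : Fin n) : ℕ :=
  ((Finset.range l.length).filter fun k => segStart G l i k).card

/-- A set `Γ` of country-specific parameters for `n` countries. -/
structure Params (n : ℕ) where
  icl : ℕ∞
  ncl : Fin n → ℕ∞
  iss : Fin n → ℕ∞
  isn : Fin n → ℕ∞
  icl_ne_one : icl ≠ 1
  ncl_ne_one : ∀ i, ncl i ≠ 1
  iss_pos : ∀ i, 1 ≤ iss i
  isn_pos : ∀ i, 1 ≤ isn i

/-- `l` is a `Γ`-cycle of `(G, 𝒱)`. -/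
def IsGammaCycle {n : ℕ} (G : PartGraph n) (Γ : Params n) (l : List ℕ) : Prop :=
  IsCycle G l ∧
    ((∃ i, IsNationalTo G l i ∧ (l.length : ℕ∞) ≤ Γ.ncl i) ∨
      (IsInternational G l ∧ (l.length : ℕ∞) ≤ Γ.icl ∧
        (∀ i, ∀ k < l.length, segStart G l i k → (runLen G l i k : ℕ∞) ≤ Γ.iss i) ∧
        (∀ i, (numSegs G l i : ℕ∞) ≤ Γ.isn i)))

/-- A cycle packing of `G`: a set of pairwise vertex-disjoint cycles. -/
def IsPacking {n : ℕ} (G : PartGraph n) (P : Finset (List ℕ)) : Prop :=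
  (∀ l ∈ P, IsCycle G l) ∧
    ∀ l ∈ P, ∀ l' ∈ P, l ≠ l' → ∀ v ∈ l, v ∉ l'

/-- The size of a cycle packing: total number of arcs (= vertices) of its cycles. -/
def packSize (P : Finset (List ℕ)) : ℕ := ∑ l ∈ P, l.length

/-- A `Γ`-cycle packing of `(G, 𝒱)`. -/
def IsGammaPackingG {n : ℕ} (G : PartGraph n) (Γ : Params n) (P : Finset (List ℕ)) : Prop :=
  IsPacking G P ∧ ∀ l ∈ P, IsGammaCycle G Γ l


/-- An IKEP instance `I = ⟨G, 𝒱, Γ⟩`. -/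
structure IKEP where
  n : ℕ
  npos : 1 ≤ n
  G : PartGraph n
  prm : Params n

/-- A `Γ`-cycle packing of the instance `I`. -/
def IsGammaPacking (I : IKEP) (P : Finset (List ℕ)) : Prop :=
  IsGammaPackingG I.G I.prm P

/-- The utility `u_i(C)` of country `i` from the cycle `C`: the number of arcs
of `C` entering country `i`, i.e. the number of vertices of `C` in country `i`. -/
noncomputable def cycUtil {n : ℕ} (G : PartGraph n) (i : Fin n) (l : List ℕ) : ℕ :=
  (l.filter fun v => G.country v = i).length

/-- The utility `u_i(𝒞)` of country `i` from a cycle packing. -/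
noncomputable def packUtil {n : ℕ} (G : PartGraph n) (i : Fin n) (P : Finset (List ℕ)) : ℕ :=
  ∑ l ∈ P, cycUtil G i l

/-- `opt(I)`: the maximum size of a `Γ`-cycle packing of `G`. -/
noncomputable def optSize (I : IKEP) : ℕ :=
  sSup {m | ∃ P, IsGammaPacking I P ∧ packSize P = m}

/-- `nat_i(I)`: the maximum size of a `Γ`-cycle packing of the subgraph
`G[V_i]` induced by country `i` (all its cycles are national, so the only
constraint from `Γ` is the national cycle limit `ncl i`). -/
noncomputable def natSize (I : IKEP) (i : Fin I.n) : ℕ :=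
  sSup {m | ∃ P, IsPacking I.G P ∧ (∀ l ∈ P, IsNationalTo I.G l i) ∧
    (∀ l ∈ P, (l.length : ℕ∞) ≤ I.prm.ncl i) ∧ packSize P = m}

/-- A (randomised) mechanism: for every IKEP instance it returns one `Γ`-cycle
packing according to a (finitely supported) probability distribution on the
set `𝒟_I` of all `Γ`-cycle packings of `G`. -/
structure Mechanism where
  dist : IKEP → (Finset (List ℕ) →₀ ℝ)
  nonneg : ∀ I P, 0 ≤ dist I P
  sum_one : ∀ I, ((dist I).sum fun _ p => p) = 1
  supp : ∀ I P, dist I P ≠ 0 → IsGammaPacking I P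

/-- The expected utility `U_i(ℳ(I))` of country `i`. -/
noncomputable def expUtil (M : Mechanism) (I : IKEP) (i : Fin I.n) : ℝ :=
  (M.dist I).sum fun P p => p * (packUtil I.G i P : ℝ)

/-- The expected social welfare `SW(ℳ(I)) = Σ_i U_i(ℳ(I))`: the expected size
of the returned packing. -/
noncomputable def sw (M : Mechanism) (I : IKEP) : ℝ :=
  (M.dist I).sum fun P p => p * (packSize P : ℝ)

/-- Individual rationality. -/
def IndRational (M : Mechanism) : Prop :=
  ∀ I : IKEP, ∀ i : Fin I.n, (natSize I i : ℝ) ≤ expUtil M I i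

/-- Efficiency. -/
def Efficient (M : Mechanism) : Prop :=
  ∀ I : IKEP, sw M I = (optSize I : ℝ)

/-- `Γ' ≤ᵢ Γ`: country `i` misreports by declaring (weakly) smaller
international segment size and segment number; all other parameters agree. -/
def ParamLE {n : ℕ} (i : Fin n) (Γ' Γ : Params n) : Prop :=
  Γ'.icl = Γ.icl ∧ Γ'.ncl = Γ.ncl ∧
    Γ'.iss i ≤ Γ.iss i ∧ Γ'.isn i ≤ Γ.isn i ∧
    (∀ h, h ≠ i → Γ'.iss h = Γ.iss h) ∧ (∀ h, h ≠ i → Γ'.isn h = Γ.isn h)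

/-- Incentive compatibility (with respect to segment size and segment number). -/
def IncentiveCompatible (M : Mechanism) : Prop :=
  ∀ I : IKEP, ∀ i : Fin I.n, ∀ Γ' : Params I.n, ParamLE i Γ' I.prm →
    expUtil M { I with prm := Γ' } i ≤ expUtil M I i

/-- An international `Γ`-cycle of the instance `I`. -/
def IsIntlGammaCycle (I : IKEP) (l : List ℕ) : Prop :=
  IsGammaCycle I.G I.prm l ∧ IsInternational I.G l

/-- `c_int(I)`: the maximum length of an international `Γ`-cycle of `G`. -/
noncomputable def cInt (I : IKEP) : ℕ :=
  sSup {s | ∃ l, IsIntlGammaCycle I l ∧ l.length = s}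


/-- A nonempty mechanism: whenever the instance admits at least one `Γ`-cycle,
the empty packing is returned with probability `0`. -/
def NonemptyMech (M : Mechanism) : Prop :=
  ∀ I : IKEP, (∃ l, IsGammaCycle I.G I.prm l) → M.dist I ∅ = 0


/-! ### Auxiliary construction for the impossibility proof -/

section IKAux

/-- successor function of the counterexample graph (off the hub `0`). -/
def ikSig : ℕ → ℕ
  | 1 => 4 | 4 => 3 | 3 => 2 | 2 => 5 | 5 => 6 | 6 => 7
  | 9 => 10 | 10 => 11 | 11 => 14 | 14 => 13 | 13 => 17 | 17 => 16
  | 12 => 20 | 20 => 19 | 19 => 22 | 22 => 23 | 23 => 25 | 25 => 26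
  | _ => 0

def ikVerts : Finset ℕ := {0,1,2,3,4,5,6,7,9,10,11,12,13,14,16,17,19,20,22,23,25,26}

def ikArcs : Finset (ℕ × ℕ) :=
  {(0,1),(1,4),(4,3),(3,2),(2,5),(5,6),(6,7),(7,0),
   (0,9),(9,10),(10,11),(11,14),(14,13),(13,17),(17,16),(16,0),
   (0,12),(12,20),(20,19),(19,22),(22,23),(23,25),(25,26),(26,0)}

def ikG : PartGraph 3 where
  verts := ikVerts
  arcs := ikArcs
  arcs_mem := by decide
  no_loops := by
    intro v hv
    have h : ∀ p ∈ ikArcs, p.1 ≠ p.2 := by decide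
    exact h _ hv rfl
  country := fun v => ⟨v % 3, Nat.mod_lt _ (by norm_num)⟩
  country_nonempty := by decide

def ikC0 : List ℕ := [0,1,4,3,2,5,6,7]
def ikC1 : List ℕ := [0,9,10,11,14,13,17,16]
def ikC2 : List ℕ := [0,12,20,19,22,23,25,26]

def ikCC : Fin 3 → List ℕ
  | 0 => ikC0 | 1 => ikC1 | 2 => ikC2

instance instDecIsNationalTo {n : ℕ} (G : PartGraph n) (l : List ℕ) (i : Fin n) :
    Decidable (IsNationalTo G l i) :=
  inferInstanceAs (Decidable (∀ v ∈ l, G.country v = i))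

instance instDecIsNational {n : ℕ} (G : PartGraph n) (l : List ℕ) :
    Decidable (IsNational G l) :=
  inferInstanceAs (Decidable (∃ i, IsNationalTo G l i))

instance instDecIsInternational {n : ℕ} (G : PartGraph n) (l : List ℕ) :
    Decidable (IsInternational G l) :=
  inferInstanceAs (Decidable (¬ _))

instance instDecIsCycle {n : ℕ} (G : PartGraph n) (l : List ℕ) :
    Decidable (IsCycle G l) :=
  inferInstanceAs (Decidable (_ ∧ _ ∧ _ ∧ ∀ k < l.length, (cyc l k, cyc l (k+1)) ∈ G.arcs))

instance instDecSegStart {n : ℕ} (G : PartGraph n) (l : List ℕ) (i : Fin n) (k : ℕ) :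
    Decidable (segStart G l i k) :=
  inferInstanceAs (Decidable (_ ∧ _))

/-- the true parameters. -/
def ikGam : Params 3 where
  icl := ⊤
  ncl := fun _ => ⊤
  iss := fun _ => 2
  isn := fun _ => ⊤
  icl_ne_one := by decide
  ncl_ne_one := by decide
  iss_pos := by decide
  isn_pos := by decide

/-- country `i`'s misreport: `iss i = 1`. -/
def ikGam' (i : Fin 3) : Params 3 where
  icl := ⊤
  ncl := fun _ => ⊤
  iss := Function.update (fun _ => 2) i 1
  isn := fun _ => ⊤
  icl_ne_one := by decide
  ncl_ne_one := by decide
  iss_pos := by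
    intro h
    rcases eq_or_ne h i with rfl | hne
    · simp
    · simp [Function.update_of_ne hne]
  isn_pos := by intro h; exact le_top

lemma ikParamLE (i : Fin 3) : ParamLE i (ikGam' i) ikGam := by
  refine ⟨rfl, rfl, ?_, le_rfl, ?_, fun _ _ => rfl⟩
  · simp [ikGam', ikGam]
  · intro h hh; simp [ikGam', ikGam, Function.update_of_ne hh]

/-! ### generic `cyc` lemmas -/

lemma ikcyc_congr {l : List ℕ} {a b : ℕ} (h : a % l.length = b % l.length) :
    cyc l a = cyc l b := by unfold cyc; rw [h]

lemma ikcyc_mem {l : List ℕ} (hl : 0 < l.length) (k : ℕ) : cyc l k ∈ l := by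
  unfold cyc
  rw [List.getD_eq_getElem l 0 (Nat.mod_lt _ hl)]
  exact List.getElem_mem _

lemma ikcyc_inj {l : List ℕ} (hnd : l.Nodup) (hl : 0 < l.length) {a b : ℕ}
    (h : cyc l a = cyc l b) : a % l.length = b % l.length := by
  unfold cyc at h
  rw [List.getD_eq_getElem l 0 (Nat.mod_lt _ hl),
    List.getD_eq_getElem l 0 (Nat.mod_lt _ hl)] at h
  exact (hnd.getElem_inj_iff).mp h

lemma ikarcs_all {n : ℕ} {G : PartGraph n} {l : List ℕ} (hC : IsCycle G l) (k : ℕ) :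
    (cyc l k, cyc l (k+1)) ∈ G.arcs := by
  have hl : 0 < l.length := by have := hC.1; omega
  have h := hC.2.2.2 (k % l.length) (Nat.mod_lt _ hl)
  have e1 : cyc l (k % l.length) = cyc l k :=
    ikcyc_congr (Nat.mod_mod_of_dvd k dvd_rfl)
  have e2 : cyc l (k % l.length + 1) = cyc l (k+1) :=
    ikcyc_congr (Nat.mod_add_mod k l.length 1)
  rw [e1, e2] at h
  exact h

end IKAux

section IKAux2

lemma ikF1 : ∀ p ∈ ikArcs, p.1 ≠ 0 → p.2 = ikSig p.1 := by decide

lemma ikF2 : ∀ v ∈ ikVerts, v ≠ 0 → ∃ m ∈ Finset.range 8, ikSig^[m] v = 0 := by decide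

lemma ikF3 : ∀ p ∈ ikArcs, p.1 = 0 → p.2 = 1 ∨ p.2 = 9 ∨ p.2 = 12 := by decide

lemma ikstep {l : List ℕ} (hC : IsCycle ikG l) {m : ℕ} (h : cyc l m ≠ 0) :
    cyc l (m+1) = ikSig (cyc l m) :=
  ikF1 _ (ikarcs_all hC m) h

lemma ikhub_mem {l : List ℕ} (hC : IsCycle ikG l) : 0 ∈ l := by
  by_contra h0
  have hl : 0 < l.length := by have := hC.1; omega
  have hne : ∀ k, cyc l k ≠ 0 := fun k hk => h0 (hk ▸ ikcyc_mem hl k)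
  have hiter : ∀ m, cyc l m = ikSig^[m] (cyc l 0) := by
    intro m
    induction m with
    | zero => rfl
    | succ m ih => rw [ikstep hC (hne m), ih, Function.iterate_succ_apply']
  have hv : cyc l 0 ∈ ikVerts := hC.2.2.1 _ (ikcyc_mem hl 0)
  obtain ⟨m, -, hm⟩ := ikF2 _ hv (hne 0)
  exact hne m (by rw [hiter m, hm])

lemma ikbranch {l : List ℕ} (hC : IsCycle ikG l) {t : ℕ} (ht : cyc l t = 0)
    (c : List ℕ) (hlen8 : c.length = 8) (hnd : c.Nodup)
    (hc0 : c.getD 0 0 = 0)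
    (hx : cyc l (t+1) = c.getD 1 0)
    (hiter : ∀ k < 7, ikSig^[k] (c.getD 1 0) = c.getD (k+1) 0)
    (hnz : ∀ k, 1 ≤ k → k < 8 → c.getD k 0 ≠ 0)
    (hback : ikSig (c.getD 7 0) = 0) :
    l.length = 8 ∧ (∀ k, cyc l (t + k) = cyc c k) ∧ l.Perm c := by
  have hl2 := hC.1
  have hl : 0 < l.length := by omega
  have hmid : ∀ k, k ≤ 6 → cyc l (t+1+k) = c.getD (k+1) 0 := by
    intro k
    induction k with
    | zero => intro _; simpa using hx
    | succ k ih =>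
      intro hk6
      have ihk := ih (by omega)
      have hnz' : cyc l (t+1+k) ≠ 0 := by
        rw [ihk]; exact hnz (k+1) (by omega) (by omega)
      show cyc l ((t+1+k)+1) = c.getD (k+1+1) 0
      rw [ikstep hC hnz', ihk, ← hiter k (by omega), ← Function.iterate_succ_apply' ikSig k (c.getD 1 0)]
      exact hiter (k+1) (by omega)
  have h8 : cyc l (t+8) = 0 := by
    have h7 : cyc l (t+7) = c.getD 7 0 := hmid 6 (by omega)
    have hnz' : cyc l (t+7) ≠ 0 := by
      rw [h7]; exact hnz 7 (by omega) (by omega)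
    show cyc l ((t+7)+1) = 0
    rw [ikstep hC hnz', h7, hback]
  have hdvd : l.length ∣ 8 := by
    have hmod := ikcyc_inj hC.2.1 hl (h8.trans ht.symm)
    have hmq : t % l.length = (t+8) % l.length := hmod.symm
    have := (Nat.modEq_iff_dvd' (Nat.le_add_right t 8)).mp hmq
    simpa using this
  have hle8 : l.length ≤ 8 := Nat.le_of_dvd (by norm_num) hdvd
  have h248 : l.length = 2 ∨ l.length = 4 ∨ l.length = 8 := by
    obtain ⟨d, hd⟩ := hdvd
    have hd1 : 1 ≤ d := by nlinarith
    have hd4 : d ≤ 4 := by nlinarith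
    interval_cases d <;> omega
  have hlen : l.length = 8 := by
    rcases h248 with h | h | h
    · exfalso
      have e2 : cyc l (t+1+1) = c.getD 2 0 := hmid 1 (by omega)
      have e2' : cyc l (t+2) = cyc l t := ikcyc_congr (by rw [h]; omega)
      rw [ht] at e2'
      exact hnz 2 (by omega) (by omega) (by rw [← e2]; exact e2')
    · exfalso
      have e4 : cyc l (t+1+3) = c.getD 4 0 := hmid 3 (by omega)
      have e4' : cyc l (t+4) = cyc l t := ikcyc_congr (by rw [h]; omega)
      rw [ht] at e4'
      exact hnz 4 (by omega) (by omega) (by rw [← e4]; exact e4')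
    · exact h
  have hall7 : ∀ k ≤ 7, cyc l (t+k) = c.getD k 0 := by
    intro k hk
    rcases Nat.eq_zero_or_pos k with rfl | hkpos
    · exact ht.trans hc0.symm
    · have : cyc l (t+1+(k-1)) = c.getD ((k-1)+1) 0 := hmid (k-1) (by omega)
      have e : t+1+(k-1) = t+k := by omega
      have e2 : (k-1)+1 = k := by omega
      rw [e, e2] at this
      exact this
  have hrot : ∀ k, cyc l (t+k) = cyc c k := by
    intro k
    have h1 : cyc l (t+k) = cyc l (t + k % 8) := ikcyc_congr (by rw [hlen]; omega)
    rw [h1, hall7 (k % 8) (by omega)]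
    unfold cyc
    rw [hlen8]
  refine ⟨hlen, hrot, ?_⟩
  have hsub : c ⊆ l := by
    intro v hv
    obtain ⟨m, hm, he⟩ := List.mem_iff_getElem.mp hv
    have hgd : c.getD m 0 = v := by
      rw [List.getD_eq_getElem c 0 hm]; exact he
    have hm7 : m ≤ 7 := by rw [hlen8] at hm; omega
    rw [← hgd, ← hall7 m hm7]
    exact ikcyc_mem hl _
  obtain ⟨l', hper, hsl⟩ := List.subperm_of_subset hnd hsub
  have hll : l' = l := hsl.eq_of_length (by rw [hper.length_eq, hlen8, hlen])
  exact hll ▸ hper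

lemma ikclassify {l : List ℕ} (hC : IsCycle ikG l) :
    ∃ j : Fin 3, ∃ t, l.length = 8 ∧ (∀ k, cyc l (t + k) = cyc (ikCC j) k) ∧ l.Perm (ikCC j) := by
  obtain ⟨t, htl, hte⟩ := List.mem_iff_getElem.mp (ikhub_mem hC)
  have ht : cyc l t = 0 := by
    unfold cyc
    rw [Nat.mod_eq_of_lt htl, List.getD_eq_getElem l 0 htl]
    exact hte
  have harc := ikarcs_all hC t
  rw [ht] at harc
  rcases ikF3 _ harc rfl with hx | hx | hx
  · exact ⟨0, t, ikbranch hC ht ikC0 (by decide) (by decide) (by decide) hx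
      (by decide) (by decide) (by decide)⟩
  · exact ⟨1, t, ikbranch hC ht ikC1 (by decide) (by decide) (by decide) hx
      (by decide) (by decide) (by decide)⟩
  · exact ⟨2, t, ikbranch hC ht ikC2 (by decide) (by decide) (by decide) hx
      (by decide) (by decide) (by decide)⟩

end IKAux2

section IKAux3

lemma iktwo_le_runLen {l : List ℕ} {i : Fin 3} {k : ℕ} (hlen : l.length = 8)
    (h0 : ikG.country (cyc l k) = i) (h1 : ikG.country (cyc l (k+1)) = i) :
    2 ≤ runLen ikG l i k := by
  unfold runLen
  have hsub : ({0,1} : Finset ℕ) ⊆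
      (Finset.range l.length).filter (fun j => ∀ j' ≤ j, ikG.country (cyc l (k + j')) = i) := by
    intro j hj
    simp only [Finset.mem_insert, Finset.mem_singleton] at hj
    rcases hj with rfl | rfl
    · refine Finset.mem_filter.mpr ⟨Finset.mem_range.mpr (by omega), ?_⟩
      intro j' hj'
      interval_cases j'
      simpa using h0
    · refine Finset.mem_filter.mpr ⟨Finset.mem_range.mpr (by omega), ?_⟩
      intro j' hj'
      interval_cases j'
      · simpa using h0
      · exact h1
  calc 2 = ({0,1} : Finset ℕ).card := by decide
    _ ≤ _ := Finset.card_le_card hsub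

lemma ikseg_violation {l : List ℕ} {t s : ℕ} {i : Fin 3} {c : List ℕ}
    (hlen : l.length = 8) (hrot : ∀ k, cyc l (t+k) = cyc c k)
    (h0 : ikG.country (cyc c s) = i) (h1 : ikG.country (cyc c (s+1)) = i)
    (h7 : ikG.country (cyc c (s+7)) ≠ i) :
    ∃ k < l.length, segStart ikG l i k ∧ 2 ≤ runLen ikG l i k := by
  have key : ∀ m, cyc l ((t+s) % 8 + m) = cyc c (s+m) := by
    intro m
    have e1 : cyc l ((t+s) % 8 + m) = cyc l (t+(s+m)) := ikcyc_congr (by rw [hlen]; omega)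
    rw [e1, hrot]
  have k0 : cyc l ((t+s) % 8) = cyc c s := by simpa using key 0
  refine ⟨(t+s) % 8, by rw [hlen]; exact Nat.mod_lt _ (by norm_num), ⟨?_, ?_⟩, ?_⟩
  · rw [k0]; exact h0
  · have e : (t+s) % 8 + l.length - 1 = (t+s) % 8 + 7 := by rw [hlen]; omega
    rw [e, key 7]; exact h7
  · exact iktwo_le_runLen hlen (by rw [k0]; exact h0) (by rw [key 1]; exact h1)

lemma ikintl_of {l : List ℕ} {v w : ℕ} (hv : v ∈ l) (hw : w ∈ l)
    (hne : ikG.country v ≠ ikG.country w) : IsInternational ikG l := by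
  rintro ⟨i, hi⟩
  exact hne ((hi v hv).trans (hi w hw).symm)

lemma ikperm_util {l c : List ℕ} (h : l.Perm c) (i : Fin 3) :
    cycUtil ikG i l = cycUtil ikG i c := by
  simp only [cycUtil]
  exact (h.filter _).length_eq

lemma ikgam'_util (i : Fin 3) {l : List ℕ} (hg : IsGammaCycle ikG (ikGam' i) l) :
    cycUtil ikG i l = 3 := by
  obtain ⟨j, t, hlen, hrot, hperm⟩ := ikclassify hg.1
  have hmem0 : (0:ℕ) ∈ l := hperm.mem_iff.mpr (by fin_cases j <;> decide)
  have hmem2 : (ikCC j).getD 2 0 ∈ l := hperm.mem_iff.mpr (by fin_cases j <;> decide)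
  have hintl : IsInternational ikG l :=
    ikintl_of hmem0 hmem2 (by fin_cases j <;> decide)
  by_cases hji : j = i
  · subst hji
    have hval : ∀ j : Fin 3, cycUtil ikG j (ikCC j) = 3 := by decide
    rw [ikperm_util hperm]
    exact hval _
  · exfalso
    have key : ∀ i j : Fin 3, j ≠ i → ∃ s ∈ Finset.range 8,
        ikG.country (cyc (ikCC j) s) = i ∧ ikG.country (cyc (ikCC j) (s+1)) = i ∧
        ikG.country (cyc (ikCC j) (s+7)) ≠ i := by decide
    obtain ⟨s, -, h0, h1, h7⟩ := key i j hji
    obtain ⟨k, hk, hseg, h2run⟩ := ikseg_violation hlen hrot h0 h1 h7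
    rcases hg.2 with ⟨i', hnat, -⟩ | ⟨-, -, hiss, -⟩
    · exact hintl ⟨i', hnat⟩
    · have hle := hiss i k hk hseg
      have hupd : (ikGam' i).iss i = 1 := by simp [ikGam']
      rw [hupd] at hle
      have : runLen ikG l i k ≤ 1 := by exact_mod_cast hle
      omega

lemma ikpack_size_le {P : Finset (List ℕ)} (hP : IsPacking ikG P) : packSize P ≤ 8 := by
  have hcard : P.card ≤ 1 := by
    rw [Finset.card_le_one]
    intro a ha b hb
    by_contra hab
    exact hP.2 a ha b hb hab 0 (ikhub_mem (hP.1 a ha)) (ikhub_mem (hP.1 b hb))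
  have hbound : ∀ l ∈ P, l.length ≤ 8 := by
    intro l hl
    obtain ⟨j, t, hlen, -, -⟩ := ikclassify (hP.1 l hl)
    omega
  have := Finset.sum_le_card_nsmul P (fun l => l.length) 8 hbound
  simp only [smul_eq_mul] at this
  calc packSize P = ∑ l ∈ P, l.length := rfl
    _ ≤ P.card * 8 := this
    _ ≤ 1 * 8 := by exact Nat.mul_le_mul_right _ hcard
    _ = 8 := by norm_num

lemma iksum_cycUtil (l : List ℕ) : ∑ i : Fin 3, cycUtil ikG i l = l.length := by
  induction l with
  | nil => simp [cycUtil]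
  | cons v l ih =>
    have hstep : ∀ i : Fin 3, cycUtil ikG i (v :: l)
        = (if ikG.country v = i then 1 else 0) + cycUtil ikG i l := by
      intro i
      by_cases h : ikG.country v = i
      · simp [cycUtil, List.filter_cons, h]; omega
      · simp [cycUtil, List.filter_cons, h]
    rw [Finset.sum_congr rfl (fun i _ => hstep i), Finset.sum_add_distrib, ih]
    simp [Finset.sum_ite_eq, List.length_cons]
    omega

lemma iksum_packUtil (P : Finset (List ℕ)) :
    ∑ i : Fin 3, packUtil ikG i P = packSize P := by
  unfold packUtil packSize
  rw [Finset.sum_comm]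
  exact Finset.sum_congr rfl fun l _ => iksum_cycUtil l

lemma ikGamCycle' : ∀ i : Fin 3, IsGammaCycle ikG (ikGam' i) (ikCC i) := by
  intro i
  refine ⟨?_, Or.inr ⟨?_, le_top, ?_, fun _ => le_top⟩⟩
  · revert i; decide
  · revert i; decide
  · revert i; decide

end IKAux3


def ikNpos : (1:ℕ) ≤ 3 := by norm_num

def ikI : IKEP := ⟨3, ikNpos, ikG, ikGam⟩

def ikI' (i : Fin 3) : IKEP := ⟨3, ikNpos, ikG, ikGam' i⟩

/-- There is no mechanism that is both nonempty and incentive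
compatible. -/
theorem no_nonempty_and_IC (M : Mechanism) (hne : NonemptyMech M) :
    ¬ IncentiveCompatible M := by
  intro hic
  have key1 : ∀ i : Fin 3, (3:ℝ) ≤ expUtil M (ikI' i) i := by
    intro i
    have hzero : M.dist (ikI' i) ∅ = 0 := hne _ ⟨ikCC i, ikGamCycle' i⟩
    have hterm : ∀ P ∈ (M.dist (ikI' i)).support,
        3 * (M.dist (ikI' i)) P ≤ (M.dist (ikI' i)) P * (packUtil ikG i P : ℝ) := by
      intro P hP
      have hd : (M.dist (ikI' i)) P ≠ 0 := Finsupp.mem_support_iff.mp hP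
      have hg : IsGammaPacking (ikI' i) P := M.supp _ P hd
      have hPne : P.Nonempty := by
        rcases Finset.eq_empty_or_nonempty P with rfl | h
        · exact absurd hzero hd
        · exact h
      obtain ⟨l₀, hl₀⟩ := hPne
      have hu : 3 ≤ packUtil ikG i P := by
        have h3 : cycUtil ikG i l₀ = 3 := ikgam'_util i (hg.2 l₀ hl₀)
        calc 3 = cycUtil ikG i l₀ := h3.symm
          _ ≤ packUtil ikG i P := Finset.single_le_sum (fun _ _ => Nat.zero_le _) hl₀
      have hp0 : 0 ≤ (M.dist (ikI' i)) P := M.nonneg _ P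
      have hcast : (3:ℝ) ≤ (packUtil ikG i P : ℝ) := by exact_mod_cast hu
      nlinarith
    calc (3:ℝ) = 3 * ((M.dist (ikI' i)).sum fun _ p => p) := by rw [M.sum_one]; ring
      _ = ∑ P ∈ (M.dist (ikI' i)).support, 3 * (M.dist (ikI' i)) P := by
          rw [Finsupp.sum, Finset.mul_sum]
      _ ≤ ∑ P ∈ (M.dist (ikI' i)).support, (M.dist (ikI' i)) P * (packUtil ikG i P : ℝ) :=
          Finset.sum_le_sum hterm
      _ = expUtil M (ikI' i) i := by rfl
  have key2 : ∀ i : Fin 3, expUtil M (ikI' i) i ≤ expUtil M ikI i := by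
    intro i
    have h := hic ikI i (ikGam' i) (ikParamLE i)
    exact h
  have key3 : ∑ i : Fin 3, expUtil M ikI i ≤ 8 := by
    have hterm : ∀ P ∈ (M.dist ikI).support,
        ∑ i : Fin 3, (M.dist ikI) P * (packUtil ikG i P : ℝ) ≤ (M.dist ikI) P * 8 := by
      intro P hP
      have hd : (M.dist ikI) P ≠ 0 := Finsupp.mem_support_iff.mp hP
      have hg : IsGammaPacking ikI P := M.supp _ P hd
      have hsize : packSize P ≤ 8 := ikpack_size_le hg.1
      calc ∑ i : Fin 3, (M.dist ikI) P * (packUtil ikG i P : ℝ)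
          = (M.dist ikI) P * ∑ i : Fin 3, (packUtil ikG i P : ℝ) := by rw [Finset.mul_sum]
        _ = (M.dist ikI) P * (packSize P : ℝ) := by
            congr 1
            rw [← Nat.cast_sum, iksum_packUtil]
        _ ≤ (M.dist ikI) P * 8 := by
            have h8 : ((packSize P : ℕ) : ℝ) ≤ 8 := by exact_mod_cast hsize
            nlinarith [M.nonneg ikI P]
    calc ∑ i : Fin 3, expUtil M ikI i
        = ∑ i : Fin 3, ∑ P ∈ (M.dist ikI).support, (M.dist ikI) P * (packUtil ikG i P : ℝ) := by
          refine Finset.sum_congr rfl fun i _ => ?_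
          rfl
      _ = ∑ P ∈ (M.dist ikI).support, ∑ i : Fin 3, (M.dist ikI) P * (packUtil ikG i P : ℝ) :=
          Finset.sum_comm
      _ ≤ ∑ P ∈ (M.dist ikI).support, (M.dist ikI) P * 8 := Finset.sum_le_sum hterm
      _ = 8 * ((M.dist ikI).sum fun _ p => p) := by
          rw [Finsupp.sum, Finset.mul_sum]
          exact Finset.sum_congr rfl fun _ _ => by ring
      _ = 8 := by rw [M.sum_one]; norm_num
  have h9 : (9:ℝ) ≤ ∑ i : Fin 3, expUtil M ikI i := by
    have h3 : ∀ i : Fin 3, (3:ℝ) ≤ expUtil M ikI i := fun i => le_trans (key1 i) (key2 i)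
    calc (9:ℝ) = ∑ _i : Fin 3, (3:ℝ) := by
          rw [Finset.sum_const, Finset.card_univ]
          norm_num
      _ ≤ _ := Finset.sum_le_sum fun i _ => h3 i
  linarith [key3]
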